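/- For ρ ≥ 0 and z ∈ [0,1], the function g(ρ, z) = ((1/2)(1+z)^(1/(1+ρ)) + (1/2)(1-z)^(1/(1+ρ)))^(1+ρ) satisfies 2^(-ρ) ≤ g(ρ, z) ≤ 1. -/

import Mathlib

open Real Set

noncomputable def g (ρ z : ℝ) : ℝ :=
  ((1/2) * (1 + z) ^ (1/(1+ρ)) + (1/2) * (1 - z) ^ (1/(1+ρ))) ^ (1+ρ)

lemma rpow_add_le_add_rpow' {p x y : ℝ} (hx : 0 ≤ x) (hy : 0 ≤ y) (hp : 0 ≤ p) (hp1 : p ≤ 1) :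
    (x + y) ^ p ≤ x ^ p + y ^ p := by
  have h := NNReal.rpow_add_le_add_rpow (⟨x, hx⟩ : NNReal) (⟨y, hy⟩ : NNReal) hp hp1
  have := NNReal.coe_le_coe.2 h
  push_cast at this
  exact this

theorem g_bounds (ρ : ℝ) (hρ : 0 ≤ ρ) (z : ℝ) (hz : z ∈ Set.Icc (0:ℝ) 1) :
    (2:ℝ) ^ (-ρ) ≤ g ρ z ∧ g ρ z ≤ 1 := by
  obtain ⟨hz0, hz1⟩ := hz
  have h1 : (0:ℝ) < 1 + ρ := by linarith
  set p : ℝ := 1 / (1 + ρ) with hp_def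
  have hp0 : 0 < p := by positivity
  have hp1 : p ≤ 1 := by
    rw [hp_def, div_le_one h1]; linarith
  have hmul : p * (1 + ρ) = 1 := by
    rw [hp_def]; field_simp
  have ha0 : (0:ℝ) ≤ 1 + z := by linarith
  have hb0 : (0:ℝ) ≤ 1 - z := by linarith
  set a : ℝ := (1 + z) ^ p with ha_def
  set b : ℝ := (1 - z) ^ p with hb_def
  have ha : 0 ≤ a := rpow_nonneg ha0 p
  have hb : 0 ≤ b := rpow_nonneg hb0 p
  have hS : 0 ≤ (1/2) * a + (1/2) * b := by positivity
  constructor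
  · -- lower bound
    have hsub : ((1 + z) + (1 - z)) ^ p ≤ a + b :=
      rpow_add_le_add_rpow' ha0 hb0 hp0.le hp1
    have h2 : ((1:ℝ) + z) + (1 - z) = 2 := by ring
    rw [h2] at hsub
    have hS2 : (2:ℝ) ^ (p - 1) ≤ (1/2) * a + (1/2) * b := by
      have : (2:ℝ) ^ (p - 1) = (2:ℝ) ^ p / 2 := by
        rw [Real.rpow_sub (by norm_num : (0:ℝ) < 2), Real.rpow_one]
      rw [this]; linarith
    have hmono : ((2:ℝ) ^ (p - 1)) ^ (1 + ρ) ≤ ((1/2) * a + (1/2) * b) ^ (1 + ρ) :=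
      Real.rpow_le_rpow (rpow_nonneg (by norm_num) _) hS2 h1.le
    have heq : ((2:ℝ) ^ (p - 1)) ^ (1 + ρ) = (2:ℝ) ^ (-ρ) := by
      rw [← Real.rpow_mul (by norm_num : (0:ℝ) ≤ 2)]
      congr 1
      have : (p - 1) * (1 + ρ) = p * (1 + ρ) - (1 + ρ) := by ring
      rw [this, hmul]; ring
    rw [heq] at hmono
    exact hmono
  · -- upper bound
    have hconv := (convexOn_rpow (by linarith : (1:ℝ) ≤ 1 + ρ)).2
      (Set.mem_Ici.2 ha) (Set.mem_Ici.2 hb)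
      (by norm_num : (0:ℝ) ≤ 1/2) (by norm_num : (0:ℝ) ≤ 1/2) (by norm_num)
    simp only [smul_eq_mul] at hconv
    have haa : a ^ (1 + ρ) = 1 + z := by
      rw [ha_def, ← Real.rpow_mul ha0, hmul, Real.rpow_one]
    have hbb : b ^ (1 + ρ) = 1 - z := by
      rw [hb_def, ← Real.rpow_mul hb0, hmul, Real.rpow_one]
    rw [haa, hbb] at hconv
    have : ((1/2) * a + (1/2) * b) ^ (1 + ρ) ≤ 1 := by
      calc ((1/2) * a + (1/2) * b) ^ (1 + ρ) ≤ (1/2) * (1 + z) + (1/2) * (1 - z) := hconv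
        _ = 1 := by ring
    exact this
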